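/- Let F : R^{N+1} → R^{N+1} be continuously differentiable and suppose that for every w ∈ R^{N+1} the Fréchet derivative F'(w) is invertible with ‖(F'(w))^{-1}‖ ≤ 1/m for a fixed constant m > 0 (operator norm induced by the max norm). Then for all u, v ∈ R^{N+1}, ‖u - v‖ ≤ (1/m) ‖F(u) - F(v)‖. In particular F is injective. -/

import Mathlib

open Set Metric Filter Topology

section Hadamard

set_option linter.unusedSectionVars false

variable {E : Type*} [NormedAddCommGroup E] [NormedSpace ℝ E] [CompleteSpace E]
variable {F : E → E} {m : ℝ}

def Hyp (F : E → E) (m : ℝ) : Prop :=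
  0 < m ∧ ContDiff ℝ 1 F ∧
    ∀ w : E, ∃ e : E ≃L[ℝ] E, (e : E →L[ℝ] E) = fderiv ℝ F w ∧
      ‖(e.symm : E →L[ℝ] E)‖ ≤ 1 / m

theorem Hyp.loc (h : Hyp F m) (x₀ : E) :
    ∃ φ : OpenPartialHomeomorph E E, x₀ ∈ φ.source ∧ (⇑φ = F) ∧
      ∃ e : E ≃L[ℝ] E, ‖(e.symm : E →L[ℝ] E)‖ ≤ 1 / m ∧
        HasFDerivAt (⇑φ.symm) ((e.symm : E →L[ℝ] E)) (F x₀) := by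
  obtain ⟨e, hee, hen⟩ := h.2.2 x₀
  have hst : HasStrictFDerivAt F ((e : E →L[ℝ] E)) x₀ := by
    rw [hee]; exact (h.2.1.contDiffAt).hasStrictFDerivAt one_ne_zero
  refine ⟨HasStrictFDerivAt.toOpenPartialHomeomorph (f := F) (hf := hst),
    HasStrictFDerivAt.mem_toOpenPartialHomeomorph_source (hf := hst),
    HasStrictFDerivAt.toOpenPartialHomeomorph_coe (hf := hst), e, hen, ?_⟩
  have h2 := HasStrictFDerivAt.to_localInverse (hf := hst)
  rw [HasStrictFDerivAt.localInverse_def] at h2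
  exact HasStrictFDerivAt.hasFDerivAt h2

def IsLiftOn (F : E → E) (u b : E) (γ : ℝ → E) (c : ℝ) : Prop :=
  γ 0 = u ∧ ContinuousOn γ (Icc 0 c) ∧
    ∀ t ∈ Icc (0:ℝ) c, F (γ t) = F u + t • (b - F u)

theorem lift_unique (h : Hyp F m) {u b : E} {γ₁ γ₂ : ℝ → E} {c : ℝ} (hc : 0 ≤ c)
    (h₁ : IsLiftOn F u b γ₁ c) (h₂ : IsLiftOn F u b γ₂ c) : EqOn γ₁ γ₂ (Icc 0 c) := by
  haveI : PreconnectedSpace (Icc (0:ℝ) c) := Subtype.preconnectedSpace isPreconnected_Icc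
  set A : Set (Icc (0:ℝ) c) := {x | γ₁ ↑x = γ₂ ↑x} with hA
  have hg₁ : Continuous ((Icc (0:ℝ) c).restrict γ₁) := h₁.2.1.restrict
  have hg₂ : Continuous ((Icc (0:ℝ) c).restrict γ₂) := h₂.2.1.restrict
  have hclosed : IsClosed A := isClosed_eq hg₁ hg₂
  have hopen : IsOpen A := by
    rw [isOpen_iff_mem_nhds]
    intro x hx
    obtain ⟨φ, hxs, hcoe, -⟩ := h.loc (γ₁ ↑x)
    have hxs₂ : γ₂ ↑x ∈ φ.source := by rwa [← hx]
    have hU : IsOpen ((Icc (0:ℝ) c).restrict γ₁ ⁻¹' φ.source ∩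
        (Icc (0:ℝ) c).restrict γ₂ ⁻¹' φ.source) :=
      (φ.open_source.preimage hg₁).inter (φ.open_source.preimage hg₂)
    refine Filter.mem_of_superset (hU.mem_nhds ⟨hxs, hxs₂⟩) ?_
    rintro y ⟨hy₁, hy₂⟩
    have hval : F (γ₁ ↑y) = F (γ₂ ↑y) := by
      rw [h₁.2.2 ↑y y.2, h₂.2.2 ↑y y.2]
    have e : φ (γ₁ ↑y) = φ (γ₂ ↑y) := by rw [hcoe]; exact hval
    exact φ.injOn hy₁ hy₂ e
  have hne : A.Nonempty := ⟨⟨0, ⟨le_rfl, hc⟩⟩, by simp [hA, h₁.1, h₂.1]⟩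
  have := (IsClopen.eq_univ ⟨hclosed, hopen⟩ hne : A = univ)
  intro t ht
  have : (⟨t, ht⟩ : Icc (0:ℝ) c) ∈ A := this ▸ mem_univ _
  exact this


theorem IsLiftOn.mono {u b : E} {γ : ℝ → E} {c c' : ℝ} (h : IsLiftOn F u b γ c)
    (hc : c' ≤ c) : IsLiftOn F u b γ c' :=
  ⟨h.1, h.2.1.mono (Icc_subset_Icc le_rfl hc),
    fun t ht => h.2.2 t (Icc_subset_Icc le_rfl hc ht)⟩


theorem lift_deriv (h : Hyp F m) {u b : E} {γ : ℝ → E} {c : ℝ}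
    (hl : IsLiftOn F u b γ c) {t : ℝ} (ht : t ∈ Icc (0:ℝ) c) :
    ∃ d : E, ‖d‖ ≤ (1 / m) * ‖b - F u‖ ∧ HasDerivWithinAt γ d (Icc 0 c) t := by
  obtain ⟨φ, hsrc, hcoe, e, hen, hder⟩ := h.loc (γ t)
  set p : ℝ → E := fun s => F u + s • (b - F u) with hp
  have hval : ∀ s ∈ Icc (0:ℝ) c, F (γ s) = p s := hl.2.2
  refine ⟨(e.symm : E →L[ℝ] E) (b - F u), ?_, ?_⟩
  · calc ‖(e.symm : E →L[ℝ] E) (b - F u)‖ ≤ ‖(e.symm : E →L[ℝ] E)‖ * ‖b - F u‖ :=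
        ContinuousLinearMap.le_opNorm _ _
    _ ≤ (1 / m) * ‖b - F u‖ := mul_le_mul_of_nonneg_right hen (norm_nonneg _)
  · have hpd : HasDerivWithinAt p (b - F u) (Icc 0 c) t := by
      have := (((hasDerivAt_id t).smul_const (b - F u)).const_add (F u))
      simpa [hp, one_smul] using this.hasDerivWithinAt
    have hFt : F (γ t) = p t := hval t ht
    have hcomp : HasDerivWithinAt (fun s => φ.symm (p s))
        ((e.symm : E →L[ℝ] E) (b - F u)) (Icc 0 c) t := by
      rw [hFt] at hder
      exact hder.comp_hasDerivWithinAt t hpd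
    have hev : ∀ᶠ s in nhdsWithin t (Icc 0 c), γ s = φ.symm (p s) := by
      have hmem : γ ⁻¹' φ.source ∈ nhdsWithin t (Icc 0 c) :=
        (hl.2.1 t ht).preimage_mem_nhdsWithin (φ.open_source.mem_nhds hsrc)
      filter_upwards [hmem, self_mem_nhdsWithin] with s hs hsI
      have : φ (γ s) = p s := by rw [hcoe]; exact hval s hsI
      rw [← this, φ.left_inv hs]
    have hevt : γ t = φ.symm (p t) := by
      have : φ (γ t) = p t := by rw [hcoe]; exact hFt
      rw [← this, φ.left_inv hsrc]
    exact hcomp.congr_of_eventuallyEq (hev.mono fun s hs => hs) hevt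

theorem lift_bound (h : Hyp F m) {u b : E} {γ : ℝ → E} {c : ℝ}
    (hl : IsLiftOn F u b γ c) :
    ∀ s ∈ Icc (0:ℝ) c, ∀ t ∈ Icc (0:ℝ) c, s ≤ t →
      ‖γ t - γ s‖ ≤ (1 / m) * ‖b - F u‖ * (t - s) := by
  intro s hs t ht hst
  set D : ℝ → E := fun x => if hx : x ∈ Icc (0:ℝ) c then (lift_deriv h hl hx).choose else 0
    with hD
  have hsub : Icc s t ⊆ Icc (0:ℝ) c := Icc_subset_Icc hs.1 ht.2
  have key := norm_image_sub_le_of_norm_deriv_le_segment'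
    (f := γ) (f' := D) (C := (1 / m) * ‖b - F u‖) (a := s) (b := t)
    (fun x hx => by
      have hx' : x ∈ Icc (0:ℝ) c := hsub hx
      rw [hD]
      simp only [dif_pos hx']
      exact ((lift_deriv h hl hx').choose_spec.2).mono hsub)
    (fun x hx => by
      have hx' : x ∈ Icc (0:ℝ) c := hsub (Ico_subset_Icc_self hx)
      rw [hD]
      simp only [dif_pos hx']
      exact (lift_deriv h hl hx').choose_spec.1)
  exact key t ⟨hst, le_rfl⟩


theorem lift_exists (h : Hyp F m) (u b : E) : ∃ γ, IsLiftOn F u b γ 1 := by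
  classical
  have hm : 0 < m := h.1
  set p : ℝ → E := fun s => F u + s • (b - F u) with hp
  have pcont : Continuous p := continuous_const.add (continuous_id.smul continuous_const)
  set K : ℝ := (1 / m) * ‖b - F u‖ with hK
  have hK0 : 0 ≤ K := mul_nonneg (by positivity) (norm_nonneg _)
  set S : Set ℝ := {c | c ∈ Icc (0:ℝ) 1 ∧ ∃ γ, IsLiftOn F u b γ c} with hS
  have h0S : (0:ℝ) ∈ S := by
    refine ⟨⟨le_rfl, zero_le_one⟩, fun _ => u, rfl, continuousOn_const, ?_⟩
    intro t ht
    have ht0 : t = 0 := le_antisymm ht.2 ht.1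
    simp [ht0]
  have hSne : S.Nonempty := ⟨0, h0S⟩
  have hSbdd : BddAbove S := ⟨1, fun c hc => hc.1.2⟩
  set T : ℝ := sSup S with hT
  have hT0 : 0 ≤ T := le_csSup hSbdd h0S
  have hT1 : T ≤ 1 := csSup_le hSne fun c hc => hc.1.2
  obtain ⟨c, cmono, climT, cS⟩ := exists_seq_tendsto_sSup hSne hSbdd
  rw [← hT] at climT
  set γ : ℕ → ℝ → E := fun n => (cS n).2.choose with hγdef
  have hγl : ∀ n, IsLiftOn F u b (γ n) (c n) := fun n => (cS n).2.choose_spec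
  have hc0 : ∀ n, 0 ≤ c n := fun n => (cS n).1.1
  have hcT : ∀ n, c n ≤ T := fun n => le_csSup hSbdd (cS n)
  have main : ∃ γ, IsLiftOn F u b γ T := by
    by_cases hex : ∃ n, c n = T
    · obtain ⟨n, hn⟩ := hex; exact ⟨γ n, hn ▸ hγl n⟩
    · have hlt : ∀ n, c n < T := fun n => lt_of_le_of_ne (hcT n) (fun e => hex ⟨n, e⟩)
      have hTpos : 0 < T := lt_of_le_of_lt (hc0 0) (hlt 0)
      set Γ : ℝ → E := fun t => if hx : ∃ n, t ≤ c n then γ hx.choose t else u with hΓ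
      have key : ∀ n, ∀ t ∈ Icc (0:ℝ) (c n), Γ t = γ n t := by
        intro n t ht
        have hex' : ∃ k, t ≤ c k := ⟨n, ht.2⟩
        rw [hΓ]; simp only [dif_pos hex']
        have hk : t ≤ c hex'.choose := hex'.choose_spec
        have h1 := (hγl hex'.choose).mono (min_le_left (c hex'.choose) (c n))
        have h2 := (hγl n).mono (min_le_right (c hex'.choose) (c n))
        exact lift_unique h (le_min (hc0 _) (hc0 n)) h1 h2 ⟨ht.1, le_min hk ht.2⟩
      set a : ℕ → E := fun n => γ n (c n) with ha
      have hdista : ∀ n k, n ≤ k → dist (a n) (a k) ≤ K * (c k - c n) := by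
        intro n k hnk
        have hcc : c n ≤ c k := cmono hnk
        have h1 : γ k (c n) = γ n (c n) :=
          lift_unique h (hc0 n) ((hγl k).mono hcc) (hγl n) ⟨hc0 n, le_rfl⟩
        rw [dist_eq_norm, ha]
        simp only
        rw [← h1, norm_sub_rev]
        exact lift_bound h (hγl k) (c n) ⟨hc0 n, hcc⟩ (c k) ⟨hc0 k, le_rfl⟩ hcc
      have hcauchy : CauchySeq a := by
        apply cauchySeq_of_le_tendsto_0 (b := fun n => K * (T - c n))
        · intro n k N hn hk
          rcases le_total n k with h' | h'
          · refine (hdista n k h').trans ?_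
            have := hcT k; have := cmono hn
            nlinarith
          · rw [dist_comm]
            refine (hdista k n h').trans ?_
            have := hcT n; have := cmono hk
            nlinarith
        · have : Tendsto (fun n => K * (T - c n)) atTop (𝓝 (K * (T - T))) :=
            (tendsto_const_nhds.sub climT).const_mul K
          simpa using this
      obtain ⟨z, hz⟩ := cauchySeq_tendsto_of_complete hcauchy
      set Δ : ℝ → E := fun t => if t < T then Γ t else z with hΔ
      have hFz : F z = p T := by
        have h₁ : Tendsto (fun n => F (a n)) atTop (𝓝 (F z)) :=
          ((h.2.1.continuous.tendsto z).comp hz)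
        have h₂ : ∀ n, F (a n) = p (c n) := fun n => (hγl n).2.2 (c n) ⟨hc0 n, le_rfl⟩
        have h₃ : Tendsto (fun n => p (c n)) atTop (𝓝 (p T)) := (pcont.tendsto T).comp climT
        exact tendsto_nhds_unique (h₁.congr h₂) h₃
      have hsub4 : ∀ t, 0 ≤ t → t < T → ‖z - Γ t‖ ≤ K * (T - t) := by
        intro t ht0 htT
        have hev : ∀ᶠ n in atTop, t < c n := (tendsto_order.1 climT).1 t htT
        refine le_of_tendsto_of_tendsto ((hz.sub tendsto_const_nhds).norm)
          ((climT.sub_const t).const_mul K) ?_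
        filter_upwards [hev] with n hn
        have hΓt : Γ t = γ n t := key n t ⟨ht0, hn.le⟩
        show ‖a n - Γ t‖ ≤ K * (c n - t)
        rw [hΓt]
        exact lift_bound h (hγl n) t ⟨ht0, hn.le⟩ (c n) ⟨hc0 n, le_rfl⟩ hn.le
      have hlip : ∀ x ∈ Icc (0:ℝ) T, ∀ y ∈ Icc (0:ℝ) T, x ≤ y →
          ‖Δ y - Δ x‖ ≤ K * (y - x) := by
        intro x hx y hy hxy
        by_cases hyT : y < T
        · have hxT : x < T := lt_of_le_of_lt hxy hyT
          obtain ⟨n, hn⟩ := ((tendsto_order.1 climT).1 y hyT).exists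
          have hΔy : Δ y = γ n y := by
            rw [hΔ]; simp only [if_pos hyT]; exact key n y ⟨hy.1, hn.le⟩
          have hΔx : Δ x = γ n x := by
            rw [hΔ]; simp only [if_pos hxT]; exact key n x ⟨hx.1, hxy.trans hn.le⟩
          rw [hΔy, hΔx]
          exact lift_bound h (hγl n) x ⟨hx.1, hxy.trans hn.le⟩ y ⟨hy.1, hn.le⟩ hxy
        · have hyT' : y = T := le_antisymm hy.2 (not_lt.1 hyT)
          by_cases hxT : x < T
          · have hΔy : Δ y = z := by rw [hΔ]; simp only [if_neg hyT]
            have hΔx : Δ x = Γ x := by rw [hΔ]; simp only [if_pos hxT]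
            rw [hΔy, hΔx, hyT']
            exact hsub4 x hx.1 hxT
          · have hxT' : x = T := le_antisymm hx.2 (not_lt.1 hxT)
            rw [hxT', hyT', sub_self, norm_zero]
            nlinarith
      have hΔcont : ContinuousOn Δ (Icc 0 T) := by
        have : LipschitzOnWith (Real.toNNReal K) Δ (Icc 0 T) := by
          rw [lipschitzOnWith_iff_dist_le_mul]
          intro x hx y hy
          rw [Real.coe_toNNReal K hK0, dist_eq_norm, Real.dist_eq]
          rcases le_total x y with h' | h'
          · rw [norm_sub_rev, abs_of_nonpos (by linarith), neg_sub]
            exact hlip x hx y hy h'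
          · rw [abs_of_nonneg (by linarith)]
            exact hlip y hy x hx h'
        exact this.continuousOn
      refine ⟨Δ, ?_, hΔcont, ?_⟩
      · have : Δ 0 = Γ 0 := by rw [hΔ]; simp only [if_pos hTpos]
        rw [this, key 0 0 ⟨le_rfl, hc0 0⟩]
        exact (hγl 0).1
      · intro t ht
        by_cases htT : t < T
        · obtain ⟨n, hn⟩ := ((tendsto_order.1 climT).1 t htT).exists
          have : Δ t = γ n t := by
            rw [hΔ]; simp only [if_pos htT]; exact key n t ⟨ht.1, hn.le⟩
          rw [this]
          exact (hγl n).2.2 t ⟨ht.1, hn.le⟩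
        · have htT' : t = T := le_antisymm ht.2 (not_lt.1 htT)
          have : Δ t = z := by rw [hΔ]; simp only [if_neg htT]
          rw [this, htT']
          exact hFz
  obtain ⟨δ, hδ⟩ := main
  have hTeq : T = 1 := by
    by_contra hne
    have hT1lt : T < 1 := lt_of_le_of_ne hT1 hne
    obtain ⟨φ, hsrc, hcoe, -⟩ := h.loc (δ T)
    have hpT : p T = φ (δ T) := by
      rw [hcoe]; exact (hδ.2.2 T ⟨hT0, le_rfl⟩).symm
    have hpTt : p T ∈ φ.target := by rw [hpT]; exact φ.map_source hsrc
    have hnhds : p ⁻¹' φ.target ∈ nhds T :=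
      pcont.continuousAt.preimage_mem_nhds (φ.open_target.mem_nhds hpTt)
    obtain ⟨ε, hε, hball⟩ := Metric.mem_nhds_iff.1 hnhds
    set ε' : ℝ := min (ε / 2) (1 - T) with hε'
    have hε'0 : 0 < ε' := lt_min (by linarith) (by linarith)
    have hψT : φ.symm (p T) = δ T := by rw [hpT]; exact φ.left_inv hsrc
    set Θ : ℝ → E := fun t => δ (min t T) + (φ.symm (p (max t T)) - φ.symm (p T)) with hΘ
    have hmax_mem : ∀ t, t ≤ T + ε' → p (max t T) ∈ φ.target := by
      intro t ht
      apply hball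
      rw [mem_ball, Real.dist_eq, abs_of_nonneg (by simp [le_max_right])]
      have : max t T ≤ T + ε' := max_le (by linarith) (by linarith)
      have : max t T - T ≤ ε' := by linarith
      calc max t T - T ≤ ε' := this
        _ ≤ ε / 2 := min_le_left _ _
        _ < ε := by linarith
    have hΘeq₁ : ∀ t, t ≤ T → Θ t = δ t := by
      intro t ht
      rw [hΘ]; simp only [min_eq_left ht, max_eq_right ht, sub_self, add_zero]
    have hΘeq₂ : ∀ t, T ≤ t → Θ t = φ.symm (p t) := by
      intro t ht
      rw [hΘ]
      simp only [min_eq_right ht, max_eq_left ht, hψT]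
      abel
    have hΘl : IsLiftOn F u b Θ (T + ε') := by
      refine ⟨?_, ?_, ?_⟩
      · rw [hΘeq₁ 0 hT0]; exact hδ.1
      · have c₁ : ContinuousOn (fun t => δ (min t T)) (Icc 0 (T + ε')) := by
          refine hδ.2.1.comp (continuous_id.min continuous_const).continuousOn ?_
          intro t ht
          exact ⟨le_min ht.1 hT0, min_le_right _ _⟩
        have c₂ : ContinuousOn (fun t => φ.symm (p (max t T))) (Icc 0 (T + ε')) := by
          refine φ.continuousOn_symm.comp
            (pcont.comp (continuous_id.max continuous_const)).continuousOn ?_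
          intro t ht
          exact hmax_mem t ht.2
        exact c₁.add (c₂.sub continuousOn_const)
      · intro t ht
        rcases le_total t T with h' | h'
        · rw [hΘeq₁ t h']; exact hδ.2.2 t ⟨ht.1, h'⟩
        · rw [hΘeq₂ t h']
          have hmem : p t ∈ φ.target := by
            have := hmax_mem t ht.2
            rwa [max_eq_left h'] at this
          calc F (φ.symm (p t)) = φ (φ.symm (p t)) := by rw [hcoe]
            _ = p t := φ.right_inv hmem
    have hmemS : T + ε' ∈ S := by
      refine ⟨⟨by linarith, ?_⟩, Θ, hΘl⟩
      have : ε' ≤ 1 - T := min_le_right _ _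
      linarith
    have := le_csSup hSbdd hmemS
    rw [← hT] at this
    linarith
  exact ⟨δ, hTeq ▸ hδ⟩



variable [ProperSpace E]

theorem endpoint_eq (h : Hyp F m) (v u : E) {γu : ℝ → E}
    (hγu : IsLiftOn F u (F v) γu 1) : γu 1 = v := by
  classical
  have hm : 0 < m := h.1
  set H : E → E := fun w => (lift_exists h w (F v)).choose 1 with hH
  have hHl : ∀ w, IsLiftOn F w (F v) (lift_exists h w (F v)).choose 1 :=
    fun w => (lift_exists h w (F v)).choose_spec
  have hHeq : ∀ w (γ' : ℝ → E), IsLiftOn F w (F v) γ' 1 → γ' 1 = H w := by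
    intro w γ' hγ'
    exact lift_unique h zero_le_one hγ' (hHl w) ⟨zero_le_one, le_rfl⟩
  have hFH : ∀ w, F (H w) = F v := by
    intro w
    have := (hHl w).2.2 1 ⟨zero_le_one, le_rfl⟩
    simpa using this
  have hHv : H v = v := by
    have hc : IsLiftOn F v (F v) (fun _ => v) 1 :=
      ⟨rfl, continuousOn_const, by intro t ht; simp⟩
    exact (hHeq v _ hc).symm
  have hHcont : Continuous H := by
    rw [continuous_iff_continuousAt]
    intro u₀
    rw [Metric.continuousAt_iff]
    intro ε hε
    set γ₀ : ℝ → E := (lift_exists h u₀ (F v)).choose with hγ₀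
    have hγ₀l : IsLiftOn F u₀ (F v) γ₀ 1 := (lift_exists h u₀ (F v)).choose_spec
    set C : Set E := γ₀ '' Icc 0 1 with hC
    have hCcomp : IsCompact C := isCompact_Icc.image_of_continuousOn hγ₀l.2.1
    obtain ⟨R, hR⟩ := hCcomp.isBounded.subset_closedBall 0
    set Kc : Set E := closedBall (0:E) (R + 1) with hKc
    have hKcomp : IsCompact Kc := isCompact_closedBall _ _
    have hfc : Continuous (fderiv ℝ F) := h.2.1.continuous_fderiv one_ne_zero
    have huc : UniformContinuousOn (fderiv ℝ F) Kc :=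
      hKcomp.uniformContinuousOn_of_continuous hfc.continuousOn
    rw [Metric.uniformContinuousOn_iff] at huc
    obtain ⟨d, hd, hduc⟩ := huc (m/2) (by linarith [h.1])
    set r : ℝ := min (d/2) 1 with hr
    have hr0 : 0 < r := lt_min (by linarith) one_pos
    have hal : ∀ t ∈ Icc (0:ℝ) 1, ∀ y ∈ closedBall (γ₀ t) r, ∀ w ∈ closedBall (γ₀ t) r,
        (m/2) * ‖y - w‖ ≤ ‖F y - F w‖ := by
      intro t ht y hy w hw
      have hγ₀C : γ₀ t ∈ C := mem_image_of_mem _ ht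
      have hγ₀K : ∀ ξ ∈ closedBall (γ₀ t) r, ξ ∈ Kc := by
        intro ξ hξ
        rw [mem_closedBall] at hξ ⊢
        have h1 : dist (γ₀ t) 0 ≤ R := hR hγ₀C
        have h2 : r ≤ 1 := min_le_right _ _
        calc dist ξ 0 ≤ dist ξ (γ₀ t) + dist (γ₀ t) 0 := dist_triangle _ _ _
          _ ≤ r + R := add_le_add hξ h1
          _ ≤ R + 1 := by linarith
      set A := fderiv ℝ F (γ₀ t) with hA
      have hmv : ‖F y - F w - A (y - w)‖ ≤ (m/2) * ‖y - w‖ := by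
        refine Convex.norm_image_sub_le_of_norm_hasFDerivWithin_le'
          (f := F) (f' := fderiv ℝ F) (φ := A) (s := closedBall (γ₀ t) r) (C := m/2)
          (fun ξ _ => ((h.2.1.differentiable one_ne_zero ξ).hasFDerivAt).hasFDerivWithinAt)
          ?_ (convex_closedBall _ _) hw hy
        intro ξ hξ
        have h1 : dist ξ (γ₀ t) < d :=
          lt_of_le_of_lt (mem_closedBall.1 hξ)
            (lt_of_le_of_lt (min_le_left _ _) (by linarith))
        have h2 := hduc ξ (hγ₀K ξ hξ) (γ₀ t) (hγ₀K _ (mem_closedBall_self hr0.le)) h1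
        rw [dist_eq_norm] at h2
        exact h2.le
      have hlow : m * ‖y - w‖ ≤ ‖A (y - w)‖ := by
        obtain ⟨e, hee, hen⟩ := h.2.2 (γ₀ t)
        have h2 : (e.symm : E →L[ℝ] E) (A (y - w)) = y - w := by
          rw [hA, ← hee]; exact e.symm_apply_apply _
        have h1 : ‖y - w‖ ≤ (1/m) * ‖A (y - w)‖ := by
          calc ‖y - w‖ = ‖(e.symm : E →L[ℝ] E) (A (y - w))‖ := by rw [h2]
            _ ≤ ‖(e.symm : E →L[ℝ] E)‖ * ‖A (y - w)‖ := ContinuousLinearMap.le_opNorm _ _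
            _ ≤ (1/m) * ‖A (y - w)‖ := mul_le_mul_of_nonneg_right hen (norm_nonneg _)
        have hm := h.1
        calc m * ‖y - w‖ ≤ m * ((1/m) * ‖A (y - w)‖) := mul_le_mul_of_nonneg_left h1 hm.le
          _ = ‖A (y - w)‖ := by field_simp
      have htri : ‖A (y - w)‖ ≤ ‖F y - F w‖ + (m/2) * ‖y - w‖ := by
        calc ‖A (y - w)‖ = ‖(F y - F w) - (F y - F w - A (y - w))‖ := by congr 1; abel
          _ ≤ ‖F y - F w‖ + ‖F y - F w - A (y - w)‖ := norm_sub_le _ _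
          _ ≤ ‖F y - F w‖ + (m/2) * ‖y - w‖ := by linarith
      linarith
    set ε' : ℝ := min ε r with hε'
    have hε'0 : 0 < ε' := lt_min hε hr0
    have hFc : ContinuousAt F u₀ := h.2.1.continuous.continuousAt
    rw [Metric.continuousAt_iff] at hFc
    obtain ⟨d₁, hd₁, hFd₁⟩ := hFc ((m/2) * (ε'/2)) (by positivity)
    refine ⟨min d₁ r, lt_min hd₁ hr0, ?_⟩
    intro u' hu'
    set γ' : ℝ → E := (lift_exists h u' (F v)).choose with hγ'
    have hγ'l : IsLiftOn F u' (F v) γ' 1 := (lift_exists h u' (F v)).choose_spec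
    have hη : ‖F u' - F u₀‖ < (m/2) * (ε'/2) := by
      have := hFd₁ (lt_of_lt_of_le hu' (min_le_left _ _))
      rwa [dist_eq_norm] at this
    have hpdiff : ∀ t ∈ Icc (0:ℝ) 1, ‖F (γ' t) - F (γ₀ t)‖ ≤ ‖F u' - F u₀‖ := by
      intro t ht
      rw [hγ'l.2.2 t ht, hγ₀l.2.2 t ht]
      have heq : (F u' + t • (F v - F u')) - (F u₀ + t • (F v - F u₀))
          = (1 - t) • (F u' - F u₀) := by
        module
      rw [heq, norm_smul, Real.norm_eq_abs]
      have h1 : |1 - t| ≤ 1 := by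
        rw [abs_of_nonneg (by linarith [ht.2])]
        linarith [ht.1]
      nlinarith [norm_nonneg (F u' - F u₀)]
    have hboot : ∀ t ∈ Icc (0:ℝ) 1, dist (γ' t) (γ₀ t) ≤ r → dist (γ' t) (γ₀ t) ≤ ε'/2 := by
      intro t ht hdist
      have h1 := hal t ht (γ' t) (by rwa [mem_closedBall]) (γ₀ t) (mem_closedBall_self hr0.le)
      have h2 := hpdiff t ht
      rw [dist_eq_norm]
      rw [dist_eq_norm] at hdist
      nlinarith
    haveI : PreconnectedSpace (Icc (0:ℝ) 1) := Subtype.preconnectedSpace isPreconnected_Icc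
    set A' : Set (Icc (0:ℝ) 1) := {x | dist (γ' ↑x) (γ₀ ↑x) ≤ r} with hA'
    have hg' : Continuous ((Icc (0:ℝ) 1).restrict γ') := hγ'l.2.1.restrict
    have hg₀ : Continuous ((Icc (0:ℝ) 1).restrict γ₀) := hγ₀l.2.1.restrict
    have hAclosed : IsClosed A' := isClosed_le (hg'.dist hg₀) continuous_const
    have hAopen : IsOpen A' := by
      rw [isOpen_iff_mem_nhds]
      intro x hx
      have h2 : dist (γ' ↑x) (γ₀ ↑x) ≤ ε'/2 := hboot ↑x x.2 hx
      have hU : IsOpen {y : Icc (0:ℝ) 1 | dist (γ' ↑y) (γ₀ ↑y) < r} :=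
        isOpen_lt (hg'.dist hg₀) continuous_const
      refine mem_of_superset (hU.mem_nhds ?_) (fun y hy => show dist (γ' ↑y) (γ₀ ↑y) ≤ r from le_of_lt hy)
      show dist (γ' ↑x) (γ₀ ↑x) < r
      calc dist (γ' ↑x) (γ₀ ↑x) ≤ ε'/2 := h2
        _ < ε' := by linarith
        _ ≤ r := min_le_right _ _
    have hA0 : (⟨0, ⟨le_rfl, zero_le_one⟩⟩ : Icc (0:ℝ) 1) ∈ A' := by
      show dist (γ' 0) (γ₀ 0) ≤ r
      rw [hγ'l.1, hγ₀l.1]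
      exact le_trans (le_of_lt hu') (min_le_right _ _)
    have hAuniv := IsClopen.eq_univ ⟨hAclosed, hAopen⟩ ⟨_, hA0⟩
    have h1A : (⟨1, ⟨zero_le_one, le_rfl⟩⟩ : Icc (0:ℝ) 1) ∈ A' := hAuniv ▸ mem_univ _
    have hfin : dist (γ' 1) (γ₀ 1) ≤ ε'/2 := hboot 1 ⟨zero_le_one, le_rfl⟩ h1A
    have hHu' : H u' = γ' 1 := rfl
    have hHu₀ : H u₀ = γ₀ 1 := rfl
    rw [hHu', hHu₀]
    calc dist (γ' 1) (γ₀ 1) ≤ ε'/2 := hfin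
      _ < ε' := by linarith
      _ ≤ ε := min_le_left _ _
  haveI : PreconnectedSpace E := ⟨(convex_univ).isPreconnected⟩
  have hZopen : IsOpen {w : E | H w = v} := by
    rw [isOpen_iff_mem_nhds]
    intro w hw
    obtain ⟨φ, hvs, hcoe, -⟩ := h.loc v
    have hsrc : H w ∈ φ.source := by rw [hw]; exact hvs
    have hnb : H ⁻¹' φ.source ∈ nhds w :=
      hHcont.continuousAt.preimage_mem_nhds (φ.open_source.mem_nhds hsrc)
    refine mem_of_superset hnb ?_
    intro w' hw'
    show H w' = v
    refine φ.injOn hw' hvs ?_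
    have e1 : φ (H w') = F (H w') := by rw [hcoe]
    have e2 : φ v = F v := by rw [hcoe]
    rw [e1, e2, hFH w']
  have hZclosed : IsClosed {w : E | H w = v} := isClosed_eq hHcont continuous_const
  have hZuniv := IsClopen.eq_univ ⟨hZclosed, hZopen⟩ ⟨v, hHv⟩
  have hu : H u = v := by
    have : u ∈ ({w : E | H w = v}) := hZuniv ▸ mem_univ u
    exact this
  rw [hHeq u γu hγu, hu]



theorem hadamard_ineq (h : Hyp F m) (u v : E) : ‖u - v‖ ≤ (1 / m) * ‖F u - F v‖ := by
  obtain ⟨γ, hγ⟩ := lift_exists h u (F v)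
  have hend : γ 1 = v := endpoint_eq h v u hγ
  have hb := lift_bound h hγ 0 ⟨le_rfl, zero_le_one⟩ 1 ⟨zero_le_one, le_rfl⟩ zero_le_one
  rw [hγ.1, hend] at hb
  rw [norm_sub_rev u v, norm_sub_rev (F u) (F v)]
  simpa using hb

end Hadamard

theorem stmt_12 (N : ℕ) (m : ℝ) (hm : 0 < m)
    (F : (Fin (N + 1) → ℝ) → (Fin (N + 1) → ℝ)) (hF : ContDiff ℝ 1 F)
    (hinv : ∀ w : Fin (N + 1) → ℝ,
      ∃ G : (Fin (N + 1) → ℝ) →L[ℝ] (Fin (N + 1) → ℝ),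
        G.comp (fderiv ℝ F w) = ContinuousLinearMap.id ℝ (Fin (N + 1) → ℝ) ∧
        (fderiv ℝ F w).comp G = ContinuousLinearMap.id ℝ (Fin (N + 1) → ℝ) ∧
        ‖G‖ ≤ 1 / m) :
    (∀ u v : Fin (N + 1) → ℝ, ‖u - v‖ ≤ (1 / m) * ‖F u - F v‖) ∧
    Function.Injective F := by
  have h : Hyp F m := by
    refine ⟨hm, hF, ?_⟩
    intro w
    obtain ⟨G, hG1, hG2, hGn⟩ := hinv w
    refine ⟨ContinuousLinearEquiv.equivOfInverse (fderiv ℝ F w) G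
      (fun x => by simpa using ContinuousLinearMap.ext_iff.1 hG1 x)
      (fun x => by simpa using ContinuousLinearMap.ext_iff.1 hG2 x), rfl, ?_⟩
    exact hGn
  have hmain : ∀ u v : Fin (N + 1) → ℝ, ‖u - v‖ ≤ (1 / m) * ‖F u - F v‖ :=
    fun u v => hadamard_ineq h u v
  refine ⟨hmain, ?_⟩
  intro a b hab
  have := hmain a b
  rw [hab, sub_self, norm_zero, mul_zero] at this
  have h0 : ‖a - b‖ = 0 := le_antisymm this (norm_nonneg _)
  rwa [norm_sub_eq_zero_iff] at h0
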